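/- Let I and J be admissible multi-indices with J nonempty. Then the product P^I · P^J in B lies in the F_2-linear span of the set of elements P^K, where K ranges over nonempty admissible multi-indices with e(K) ≥ e(J). -/

import Mathlib

/-! Statements about the algebra `B` of generalized Steenrod operations at `p = 2`. -/

open scoped BigOperators

/-- The generator `P^s` of the free algebra, for `s : ℤ`. -/
noncomputable def Pfree (s : ℤ) : FreeAlgebra (ZMod 2) ℤ := FreeAlgebra.ι (ZMod 2) s

/-- The mod 2 binomial coefficient `binom (s-i-1) (r-2i)`, which is zero unless
`0 ≤ r - 2i ≤ s - i - 1`. -/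
def ademCoef (r s i : ℤ) : ZMod 2 :=
  if 0 ≤ r - 2*i ∧ r - 2*i ≤ s - i - 1 then ((s - i - 1).toNat.choose (r - 2*i).toNat : ZMod 2)
  else 0

/-- The right hand side `Σ_{i ∈ ℤ} binom(s−i−1, r−2i) P^{r+s−i} P^i` of the Adem relation;
all terms with `i` outside `Finset.Icc (r - s + 1) (r / 2)` have vanishing coefficient. -/
noncomputable def ademRHS (r s : ℤ) : FreeAlgebra (ZMod 2) ℤ :=
  ∑ i ∈ Finset.Icc (r - s + 1) (r / 2), ademCoef r s i • (Pfree (r + s - i) * Pfree i)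

/-- The Adem relations: for `r < 2s`, `P^r P^s` is related to its admissible expansion. -/
inductive AdemRel : FreeAlgebra (ZMod 2) ℤ → FreeAlgebra (ZMod 2) ℤ → Prop
  | rel (r s : ℤ) (h : r < 2*s) : AdemRel (Pfree r * Pfree s) (ademRHS r s)

/-- The algebra `B` of generalized Steenrod operations at the prime 2: the quotient of the
free noncommutative `F₂`-algebra on symbols `P^s`, `s ∈ ℤ`, by the two sided ideal generated
by the Adem relations. -/
noncomputable abbrev B : Type := RingQuot AdemRel

/-- The class of a generator `P^s` in `B`. -/
noncomputable def P (s : ℤ) : B := RingQuot.mkAlgHom (ZMod 2) AdemRel (Pfree s)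

/-- The monomial `P^I = P^{i₁} ⋯ P^{iₙ}` in `B` associated to a multi-index `I`. -/
noncomputable def PI (I : List ℤ) : B := (I.map P).prod

/-- A multi-index `I = (i₁, …, iₙ)` is admissible if `iⱼ ≥ 2 i_{j+1}` for all `j`. -/
def Admissible (I : List ℤ) : Prop := I.Chain' (fun a b => 2*b ≤ a)

/-- The excess `e(I) = i₁ − i₂ − ⋯ − iₙ` of a (nonempty) multi-index. -/
def excess : List ℤ → ℤ
  | [] => 0
  | a :: l => a - l.sum

/- ### Auxiliary material for the proof -/

namespace Stmt13Aux

/-- The span generating set: admissible monomials of excess at least `c`. -/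
def Tset (c : ℤ) : Set B :=
  {x : B | ∃ K : List ℤ, K ≠ [] ∧ Admissible K ∧ c ≤ excess K ∧ x = PI K}

lemma PI_nil : PI [] = 1 := rfl

lemma PI_cons (a : ℤ) (l : List ℤ) : PI (a :: l) = P a * PI l := by
  simp [PI]

lemma PI_append (l₁ l₂ : List ℤ) : PI (l₁ ++ l₂) = PI l₁ * PI l₂ := by
  simp [PI]

/-- The Adem relation in `B`. -/
lemma P_mul_P (r s : ℤ) (h : r < 2*s) :
    P r * P s = ∑ i ∈ Finset.Icc (r - s + 1) (r / 2),
      ademCoef r s i • (P (r + s - i) * P i) := by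
  have h1 := RingQuot.mkAlgHom_rel (ZMod 2) (AdemRel.rel r s h)
  simpa [P, ademRHS, map_sum, map_mul] using h1

lemma ademCoef_ne (r s i : ℤ) (h : ademCoef r s i ≠ 0) :
    0 ≤ r - 2*i ∧ r - 2*i ≤ s - i - 1 := by
  by_contra hcon
  rw [ademCoef, if_neg hcon] at h
  exact h rfl

/-- Rewriting an inadmissible pair inside a monomial. -/
lemma step (T : Submodule (ZMod 2) B) (pre suf : List ℤ) (r s : ℤ) (h : r < 2*s)
    (H : ∀ i : ℤ, ademCoef r s i ≠ 0 → PI (pre ++ (r + s - i) :: i :: suf) ∈ T) :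
    PI (pre ++ r :: s :: suf) ∈ T := by
  have key : PI (pre ++ r :: s :: suf)
      = ∑ i ∈ Finset.Icc (r - s + 1) (r / 2),
          ademCoef r s i • PI (pre ++ (r + s - i) :: i :: suf) := by
    calc PI (pre ++ r :: s :: suf) = PI pre * ((P r * P s) * PI suf) := by
          simp [PI_append, PI_cons, mul_assoc]
      _ = PI pre * ((∑ i ∈ Finset.Icc (r - s + 1) (r / 2),
            ademCoef r s i • (P (r + s - i) * P i)) * PI suf) := by rw [P_mul_P r s h]
      _ = ∑ i ∈ Finset.Icc (r - s + 1) (r / 2),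
            ademCoef r s i • PI (pre ++ (r + s - i) :: i :: suf) := by
          rw [Finset.sum_mul, Finset.mul_sum]
          refine Finset.sum_congr rfl fun i _ => ?_
          simp [PI_append, PI_cons, smul_mul_assoc, mul_smul_comm, mul_assoc]
  rw [key]
  refine Submodule.sum_mem _ fun i _ => ?_
  by_cases hc : ademCoef r s i = 0
  · simp [hc]
  · exact Submodule.smul_mem _ _ (H i hc)

/-- Positional upper bounds on the entries of a list. -/
def Bnd (C : ℤ) : List ℤ → Prop
  | [] => True
  | a :: l => a ≤ 2^(l.length+1) * C ∧ Bnd C l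

lemma Bnd_suffix (C : ℤ) (l₁ l₂ : List ℤ) (h : Bnd C (l₁ ++ l₂)) : Bnd C l₂ := by
  induction l₁ with
  | nil => exact h
  | cons a t ih => exact ih h.2

lemma Bnd_replace (C : ℤ) (l₁ : List ℤ) : ∀ l₂ l₂' : List ℤ, l₂'.length = l₂.length →
    Bnd C (l₁ ++ l₂) → Bnd C l₂' → Bnd C (l₁ ++ l₂') := by
  induction l₁ with
  | nil => exact fun _ _ _ _ h' => h'
  | cons a t ih =>
    intro l₂ l₂' hlen h h'
    refine ⟨?_, ih l₂ l₂' hlen h.2 h'⟩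
    simpa [List.length_append, hlen] using h.1

lemma one_le_2pow (k : ℕ) : (1:ℤ) ≤ 2^k := by
  exact_mod_cast Nat.one_le_two_pow (n := k)

/-- The weighted measure which strictly decreases under Adem rewriting. -/
def mu : List ℤ → ℤ
  | [] => 0
  | a :: l => a + 2 * mu l

lemma mu_append (l₁ l₂ : List ℤ) : mu (l₁ ++ l₂) = mu l₁ + 2^l₁.length * mu l₂ := by
  induction l₁ with
  | nil => simp [mu]
  | cons a t ih =>
    simp only [List.cons_append, mu, List.append_eq, ih, List.length_cons, pow_succ]
    ring

/-- Lower bound for `mu` on bounded lists of given sum. -/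
lemma mu_lower (C : ℤ) (hC : 0 ≤ C) : ∀ l : List ℤ, Bnd C l →
    2^l.length * l.sum - 2^(2*l.length+1) * C ≤ mu l := by
  intro l
  induction l with
  | nil =>
    intro _
    simp only [List.length_nil, List.sum_nil, mu, mul_zero, pow_one, mul_comm]
    norm_num
    linarith
  | cons a t ih =>
    intro hB
    have h1 := ih hB.2
    have h2 := hB.1
    have hX : (1:ℤ) ≤ 2 ^ t.length := one_le_2pow t.length
    set X : ℤ := 2 ^ t.length with hXdef
    have e1 : (2:ℤ)^(t.length+1) = 2*X := by rw [pow_succ]; ring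
    have e2 : (2:ℤ)^(2*t.length+1) = 2*X^2 := by
      rw [pow_succ, two_mul, pow_add]; ring
    have e3 : (2:ℤ)^(2*(t.length+1)+1) = 8*X^2 := by
      have : 2*(t.length+1)+1 = (2*t.length+1) + 2 := by ring
      rw [this, pow_add, e2]; ring
    rw [e1] at h2
    rw [e2] at h1
    have key : (2*X - 1) * a ≤ 4*X^2*C := by
      rcases le_or_gt a 0 with ha | ha
      · nlinarith
      · have h3 : (2*X)*a ≤ (2*X)*(2*X*C) := mul_le_mul_of_nonneg_left h2 (by linarith)
        nlinarith
    simp only [List.length_cons, List.sum_cons, mu, e1, e3]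
    nlinarith

/-- A non-admissible list contains an inadmissible adjacent pair. -/
lemma exists_split : ∀ I : List ℤ, ¬ Admissible I →
    ∃ pre r s suf, I = pre ++ r :: s :: suf ∧ r < 2*s := by
  intro I
  induction I with
  | nil => exact fun h => absurd List.isChain_nil h
  | cons a t ih =>
    intro h
    cases t with
    | nil => exact absurd (List.isChain_singleton a) h
    | cons b u =>
      by_cases hab : 2*b ≤ a
      · have hbu : ¬ Admissible (b :: u) := fun hbu => h (List.isChain_cons_cons.mpr ⟨hab, hbu⟩)
        obtain ⟨pre, r, s, suf, heq, hrs⟩ := ih hbu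
        exact ⟨a :: pre, r, s, suf, by rw [List.cons_append, ← heq], hrs⟩
      · exact ⟨[], a, b, u, rfl, by omega⟩

lemma excess_rewrite (pre suf : List ℤ) (r s i : ℤ) (hi : i < s) :
    excess (pre ++ r :: s :: suf) ≤ excess (pre ++ (r+s-i) :: i :: suf) := by
  cases pre with
  | nil => simp [excess]; linarith
  | cons a t =>
    simp [excess, List.sum_append]
    ring_nf
    linarith

/-- Straightening with excess control, by induction on the measure. -/
lemma lemA' (c C : ℤ) (hC : 0 ≤ C) (N : ℕ) : ∀ I : List ℤ, I ≠ [] → Bnd C I →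
    mu I ≤ 2^I.length * I.sum - 2^(2*I.length+1) * C + N → c ≤ excess I →
    PI I ∈ Submodule.span (ZMod 2) (Tset c) := by
  induction N using Nat.strong_induction_on with
  | _ N ih =>
  intro I hne hB hmu hc
  by_cases hadm : Admissible I
  · exact Submodule.subset_span ⟨I, hne, hadm, hc, rfl⟩
  obtain ⟨pre, r, s, suf, heq, hrs⟩ := exists_split I hadm
  subst heq
  refine step _ pre suf r s hrs fun i hci => ?_
  obtain ⟨h1, h2⟩ := ademCoef_ne r s i hci
  have his : i < s := by omega
  have hlen : (pre ++ (r+s-i) :: i :: suf).length = (pre ++ r :: s :: suf).length := by simp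
  have hsum : (pre ++ (r+s-i) :: i :: suf).sum = (pre ++ r :: s :: suf).sum := by
    simp; ring
  have hB' : Bnd C (pre ++ (r+s-i) :: i :: suf) := by
    refine Bnd_replace C pre _ _ (by simp) hB ?_
    obtain ⟨hr, hs, hsuf⟩ := Bnd_suffix C pre _ hB
    simp only [List.length_cons] at hr hs
    have e1 : (2:ℤ)^(suf.length+1+1) = 2*2^(suf.length+1) := by rw [pow_succ]; ring
    refine ⟨?_, ?_, hsuf⟩
    · show r+s-i ≤ 2^((i::suf).length+1)*C
      simp only [List.length_cons]
      rw [e1] at hr ⊢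
      linarith
    · show i ≤ 2^(suf.length+1)*C
      rw [e1] at hr
      linarith
  have hmu' : mu (pre ++ (r+s-i) :: i :: suf) ≤ mu (pre ++ r :: s :: suf) - 1 := by
    rw [mu_append, mu_append]
    have hmm : mu ((r+s-i) :: i :: suf) = mu (r :: s :: suf) + (i - s) := by
      simp [mu]; ring
    have hp : (1:ℤ) ≤ 2^pre.length := one_le_2pow pre.length
    rw [hmm]
    nlinarith
  have hlow := mu_lower C hC _ hB'
  rw [hlen, hsum] at hlow
  have hN : 1 ≤ N := by
    by_contra hN0
    have : N = 0 := by omega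
    subst this
    simp only [Nat.cast_zero, add_zero] at hmu
    linarith
  have hexc : c ≤ excess (pre ++ (r+s-i) :: i :: suf) :=
    le_trans hc (excess_rewrite pre suf r s i his)
  refine ih (N-1) (by omega) _ ?_ hB' ?_ hexc
  · exact List.append_ne_nil_of_right_ne_nil pre (List.cons_ne_nil _ _)
  · rw [hlen, hsum, Nat.cast_sub hN]
    push_cast
    linarith

lemma foldr_max (l : List ℤ) : 0 ≤ l.foldr max 0 ∧ ∀ a ∈ l, a ≤ l.foldr max 0 := by
  induction l with
  | nil => simp
  | cons a t ih =>
    refine ⟨le_trans ih.1 (le_max_right _ _), ?_⟩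
    intro b hb
    rcases List.mem_cons.mp hb with rfl | hb
    · exact le_max_left _ _
    · exact le_trans (ih.2 b hb) (le_max_right _ _)

lemma Bnd_of_le (C : ℤ) (hC : 0 ≤ C) : ∀ l : List ℤ, (∀ a ∈ l, a ≤ C) → Bnd C l := by
  intro l
  induction l with
  | nil => exact fun _ => trivial
  | cons a t ih =>
    intro h
    refine ⟨le_trans (h a List.mem_cons_self) ?_, ih fun b hb => h b (List.mem_cons_of_mem a hb)⟩
    exact le_mul_of_one_le_left hC (one_le_2pow _)

/-- Straightening: any nonempty monomial lies in the span of admissible ones of no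
smaller excess. -/
lemma lemA (c : ℤ) (I : List ℤ) (hne : I ≠ []) (hc : c ≤ excess I) :
    PI I ∈ Submodule.span (ZMod 2) (Tset c) := by
  obtain ⟨hC0, hCle⟩ := foldr_max I
  set C := I.foldr max 0 with hCdef
  have hB : Bnd C I := Bnd_of_le C hC0 I hCle
  set Lb : ℤ := 2^I.length * I.sum - 2^(2*I.length+1) * C with hLb
  refine lemA' c C hC0 (mu I - Lb).toNat I hne hB ?_ hc
  have := Int.self_le_toNat (mu I - Lb)
  linarith

/-- Multiplying an admissible monomial by one generator on the left. -/
lemma lemB (c a : ℤ) (K : List ℤ) (hK : K ≠ []) (hadm : Admissible K) (hc : c ≤ excess K) :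
    PI (a :: K) ∈ Submodule.span (ZMod 2) (Tset c) := by
  obtain ⟨k, K', rfl⟩ := List.exists_cons_of_ne_nil hK
  by_cases hak : 2*k ≤ a
  · refine Submodule.subset_span ⟨a :: k :: K', List.cons_ne_nil _ _, ?_, ?_, rfl⟩
    · exact List.isChain_cons_cons.mpr ⟨hak, hadm⟩
    · have h1 : excess (k :: K') = k - K'.sum := by simp [excess]
      have h2 : excess (a :: k :: K') = a - (k + K'.sum) := by simp [excess]
      rw [h1] at hc
      rw [h2]
      linarith
  · have h : a < 2*k := by omega
    have hs := step (Submodule.span (ZMod 2) (Tset c)) [] K' a k h ?_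
    · simpa using hs
    · intro i hci
      obtain ⟨h1, h2⟩ := ademCoef_ne a k i hci
      refine lemA c _ (List.cons_ne_nil _ _) ?_
      have he : excess ((a+k-i) :: i :: K') = a + k - 2*i - K'.sum := by
        simp [excess]; ring
      have hek : excess (k :: K') = k - K'.sum := by simp [excess]
      rw [hek] at hc
      rw [List.nil_append, he]
      linarith

lemma mul_left_mem (c a : ℤ) (x : B) (hx : x ∈ Submodule.span (ZMod 2) (Tset c)) :
    P a * x ∈ Submodule.span (ZMod 2) (Tset c) := by
  induction hx using Submodule.span_induction with
  | mem y hy =>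
    obtain ⟨K, hK, hadm, hc, rfl⟩ := hy
    rw [← PI_cons]
    exact lemB c a K hK hadm hc
  | zero => simp
  | add y z hy hz ihy ihz => rw [mul_add]; exact Submodule.add_mem _ ihy ihz
  | smul t y hy ihy => rw [mul_smul_comm]; exact Submodule.smul_mem _ _ ihy

end Stmt13Aux

/-- **Statement 13.** If `I` and `J` are admissible multi-indices with `J` nonempty, then the
product `P^I · P^J` in `B` lies in the `F₂`-linear span of the elements `P^K`, where `K`
ranges over nonempty admissible multi-indices with `e(K) ≥ e(J)`. -/
theorem statement13 (I J : List ℤ) (hI : Admissible I) (hJ : Admissible J) (hJne : J ≠ []) :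
    PI I * PI J ∈ Submodule.span (ZMod 2)
      {x : B | ∃ K : List ℤ, K ≠ [] ∧ Admissible K ∧ excess J ≤ excess K ∧ x = PI K} := by
  show PI I * PI J ∈ Submodule.span (ZMod 2) (Stmt13Aux.Tset (excess J))
  clear hI
  induction I with
  | nil =>
    rw [Stmt13Aux.PI_nil, one_mul]
    exact Submodule.subset_span ⟨J, hJne, hJ, le_refl _, rfl⟩
  | cons a t ih =>
    rw [Stmt13Aux.PI_cons, mul_assoc]
    exact Stmt13Aux.mul_left_mem _ a _ ih
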